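/- Let φ, ψ : S¹ → S¹ be continuous. For w ∈ 𝔻 define B_φ(w) = (1/2π)·∫₀^{2π} (φ(e^{ix}) − w)·φ(e^{ix})/(1 − w̄·φ(e^{ix}))² dx (this is the ∂̄-derivative ∂̄ξ_φ(w) of the average function), and similarly B_ψ(w). Then for every w ∈ 𝔻, one has |B_φ(w) − B_ψ(w)| ≤ ((2 − |w|)·(1 + |w|)²/(1 − |w|)⁴)·‖φ − ψ‖_{S¹}. -/

import Mathlib

/-- Arc-length distance on the unit circle: the infimum of `|x₁ − x₂|` over
representatives `ζ₁ = e^{ix₁}`, `ζ₂ = e^{ix₂}`. -/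
noncomputable def dS1 (ζ₁ ζ₂ : ℂ) : ℝ :=
  sInf {d : ℝ | ∃ x₁ x₂ : ℝ, ζ₁ = Complex.exp (Complex.I * (x₁ : ℂ)) ∧
    ζ₂ = Complex.exp (Complex.I * (x₂ : ℂ)) ∧ d = |x₁ - x₂|}

/-- `‖φ − ψ‖_{S¹} = sup_{ζ∈S¹} d_{S¹}(φ(ζ), ψ(ζ))`, the uniform arc-length
distance between two circle maps. -/
noncomputable def supDistS1 (φ ψ : ℂ → ℂ) : ℝ :=
  ⨆ ζ : {z : ℂ // ‖z‖ = 1}, dS1 (φ ζ.val) (ψ ζ.val)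

/-- The `∂̄`-derivative of the average function:
`∂̄ξ_φ(w) = (1/2π)·∫₀^{2π} (φ(e^{ix}) − w)·φ(e^{ix})/(1 − w̄·φ(e^{ix}))² dx`. -/
noncomputable def avgDerivBar (φ : ℂ → ℂ) (w : ℂ) : ℂ :=
  (1 / (2 * Real.pi)) • ∫ x in (0 : ℝ)..(2 * Real.pi),
    (φ (Complex.exp (Complex.I * (x : ℂ))) - w) * φ (Complex.exp (Complex.I * (x : ℂ))) /
      (1 - (starRingEnd ℂ) w * φ (Complex.exp (Complex.I * (x : ℂ)))) ^ 2

private lemma expI_lip (x₁ x₂ : ℝ) :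
    ‖Complex.exp (Complex.I * x₁) - Complex.exp (Complex.I * x₂)‖ ≤ |x₁ - x₂| := by
  have h : ∀ x : ℝ, x ∈ (Set.univ : Set ℝ) →
      HasDerivWithinAt (fun t : ℝ => Complex.exp (Complex.I * t))
      (Complex.I * Complex.exp (Complex.I * x)) Set.univ x := by
    intro x _
    have h1 : HasDerivAt (fun t : ℝ => (Complex.I * t : ℂ)) Complex.I x := by
      simpa using (Complex.ofRealCLM.hasDerivAt (x := x)).const_mul Complex.I
    have h2 := (Complex.hasDerivAt_exp (Complex.I * x)).comp x h1
    have h3 : HasDerivAt (fun t : ℝ => Complex.exp (Complex.I * t))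
        (Complex.I * Complex.exp (Complex.I * x)) x := by
      simpa [Function.comp_def, mul_comm] using h2
    exact h3.hasDerivWithinAt
  have hb : ∀ x : ℝ, x ∈ (Set.univ : Set ℝ) →
      ‖Complex.I * Complex.exp (Complex.I * x)‖ ≤ 1 := by
    intro x _
    simp [Complex.norm_exp]
  have := Convex.norm_image_sub_le_of_norm_hasDerivWithin_le h hb convex_univ
    (Set.mem_univ x₂) (Set.mem_univ x₁)
  simpa using this

private lemma exp_arg_repr {ζ : ℂ} (h : ‖ζ‖ = 1) :
    ζ = Complex.exp (Complex.I * (ζ.arg : ℂ)) := by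
  have := Complex.norm_mul_exp_arg_mul_I ζ
  rw [h, Complex.ofReal_one, one_mul] at this
  rw [mul_comm]
  exact this.symm

private lemma dS1_nonneg (ζ₁ ζ₂ : ℂ) : 0 ≤ dS1 ζ₁ ζ₂ := by
  apply Real.sInf_nonneg
  rintro d ⟨x₁, x₂, -, -, rfl⟩
  exact abs_nonneg _

private lemma abs_sub_le_dS1 {ζ₁ ζ₂ : ℂ} (h₁ : ‖ζ₁‖ = 1)
    (h₂ : ‖ζ₂‖ = 1) : ‖ζ₁ - ζ₂‖ ≤ dS1 ζ₁ ζ₂ := by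
  apply le_csInf
  · exact ⟨|ζ₁.arg - ζ₂.arg|, ζ₁.arg, ζ₂.arg, exp_arg_repr h₁, exp_arg_repr h₂, rfl⟩
  · rintro d ⟨x₁, x₂, hx₁, hx₂, rfl⟩
    rw [hx₁, hx₂]
    exact expI_lip x₁ x₂

private lemma dS1_le_two_pi {ζ₁ ζ₂ : ℂ} (h₁ : ‖ζ₁‖ = 1)
    (h₂ : ‖ζ₂‖ = 1) : dS1 ζ₁ ζ₂ ≤ 2 * Real.pi := by
  have hle : dS1 ζ₁ ζ₂ ≤ |ζ₁.arg - ζ₂.arg| := by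
    apply csInf_le
    · exact ⟨0, by rintro d ⟨x₁, x₂, -, -, rfl⟩; exact abs_nonneg _⟩
    · exact ⟨ζ₁.arg, ζ₂.arg, exp_arg_repr h₁, exp_arg_repr h₂, rfl⟩
  refine hle.trans ((abs_sub _ _).trans ?_)
  have := Complex.abs_arg_le_pi ζ₁
  have := Complex.abs_arg_le_pi ζ₂
  linarith

private lemma hasDerivAt_F (w z : ℂ) (hz : 1 - (starRingEnd ℂ) w * z ≠ 0) :
    HasDerivAt (fun z : ℂ => (z - w) * z / (1 - (starRingEnd ℂ) w * z) ^ 2)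
      (((2 - (starRingEnd ℂ) w * w) * z - w) / (1 - (starRingEnd ℂ) w * z) ^ 3) z := by
  have hN : HasDerivAt (fun z : ℂ => (z - w) * z) (1 * z + (z - w) * 1) z :=
    ((hasDerivAt_id z).sub_const w).mul (hasDerivAt_id z)
  have hd : HasDerivAt (fun z : ℂ => 1 - (starRingEnd ℂ) w * z) (-(starRingEnd ℂ) w) z := by
    simpa using ((hasDerivAt_id z).const_mul ((starRingEnd ℂ) w)).const_sub 1
  have hD := hd.pow 2
  have h := hN.div hD (pow_ne_zero 2 hz)
  refine h.congr_deriv ?_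
  rw [eq_comm]
  simp only [Pi.pow_apply]
  rw [div_eq_div_iff (pow_ne_zero 3 hz) (pow_ne_zero 2 (pow_ne_zero 2 hz))]
  ring

/-- For continuous `φ, ψ : S¹ → S¹` and every `w ∈ 𝔻`,
`|∂̄ξ_φ(w) − ∂̄ξ_ψ(w)| ≤ ((2 − |w|)(1 + |w|)²/(1 − |w|)⁴)·‖φ − ψ‖_{S¹}`. -/
theorem stmt_11 (φ ψ : ℂ → ℂ)
    (hcontφ : ContinuousOn φ {z : ℂ | ‖z‖ = 1})
    (hcontψ : ContinuousOn ψ {z : ℂ | ‖z‖ = 1})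
    (hmapsφ : ∀ ζ : ℂ, ‖ζ‖ = 1 → ‖φ ζ‖ = 1)
    (hmapsψ : ∀ ζ : ℂ, ‖ζ‖ = 1 → ‖ψ ζ‖ = 1) :
    ∀ w : ℂ, ‖w‖ < 1 →
      ‖avgDerivBar φ w - avgDerivBar ψ w‖ ≤
        ((2 - ‖w‖) * (1 + ‖w‖) ^ 2 / (1 - ‖w‖) ^ 4) *
          supDistS1 φ ψ := by
  intro w hw
  set r := ‖w‖ with hr
  have hr0 : 0 ≤ r := norm_nonneg w
  set M : ℝ := (2 - r ^ 2 + r) / (1 - r) ^ 3 with hM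
  have hM0 : 0 ≤ M := div_nonneg (by nlinarith) (pow_nonneg (by linarith) 3)
  set δ : ℝ := supDistS1 φ ψ with hδ
  have hδ0 : 0 ≤ δ := Real.iSup_nonneg fun ζ => dS1_nonneg _ _
  have hbdd : BddAbove (Set.range fun ζ : {z : ℂ // ‖z‖ = 1} =>
      dS1 (φ ζ.val) (ψ ζ.val)) := by
    refine ⟨2 * Real.pi, ?_⟩
    rintro _ ⟨ζ, rfl⟩
    exact dS1_le_two_pi (hmapsφ _ ζ.2) (hmapsψ _ ζ.2)
  have hδle : ∀ ζ : ℂ, ‖ζ‖ = 1 → dS1 (φ ζ) (ψ ζ) ≤ δ := fun ζ hζ =>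
    le_ciSup hbdd (⟨ζ, hζ⟩ : {z : ℂ // ‖z‖ = 1})
  -- denominator nonzero on the closed ball
  have hden : ∀ z : ℂ, ‖z‖ ≤ 1 → 1 - (starRingEnd ℂ) w * z ≠ 0 := by
    intro z hz h0
    have h1 : (1 : ℂ) = (starRingEnd ℂ) w * z := sub_eq_zero.mp h0
    have : (1 : ℝ) = ‖(starRingEnd ℂ) w * z‖ := by rw [← h1]; simp
    rw [norm_mul, Complex.norm_conj] at this
    nlinarith [norm_nonneg z]
  have hdenlb : ∀ z : ℂ, ‖z‖ ≤ 1 →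
      1 - r ≤ ‖1 - (starRingEnd ℂ) w * z‖ := by
    intro z hz
    have h1 : ‖(starRingEnd ℂ) w * z‖ ≤ r := by
      rw [norm_mul, Complex.norm_conj]
      nlinarith
    have := norm_sub_norm_le (1 : ℂ) ((starRingEnd ℂ) w * z)
    simp only [norm_one] at this
    linarith
  -- Lipschitz bound for F on unit circle points
  have key : ∀ a b : ℂ, ‖a‖ = 1 → ‖b‖ = 1 →
      ‖(a - w) * a / (1 - (starRingEnd ℂ) w * a) ^ 2
        - (b - w) * b / (1 - (starRingEnd ℂ) w * b) ^ 2‖ ≤ M * ‖a - b‖ := by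
    intro a b ha hb
    have hderiv : ∀ z : ℂ, z ∈ Metric.closedBall (0 : ℂ) 1 →
        HasDerivWithinAt (fun z : ℂ => (z - w) * z / (1 - (starRingEnd ℂ) w * z) ^ 2)
          (((2 - (starRingEnd ℂ) w * w) * z - w) / (1 - (starRingEnd ℂ) w * z) ^ 3)
          (Metric.closedBall (0 : ℂ) 1) z := by
      intro z hz
      rw [Metric.mem_closedBall, dist_zero_right] at hz
      exact (hasDerivAt_F w z (hden z hz)).hasDerivWithinAt
    have hbound : ∀ z : ℂ, z ∈ Metric.closedBall (0 : ℂ) 1 →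
        ‖((2 - (starRingEnd ℂ) w * w) * z - w) / (1 - (starRingEnd ℂ) w * z) ^ 3‖ ≤ M := by
      intro z hz
      rw [Metric.mem_closedBall, dist_zero_right] at hz
      have hcw : (starRingEnd ℂ) w * w = ((r ^ 2 : ℝ) : ℂ) := by
        rw [mul_comm, Complex.mul_conj]
        norm_cast
        exact (Complex.sq_norm w).symm
      have hnum : ‖(2 - (starRingEnd ℂ) w * w) * z - w‖ ≤ 2 - r ^ 2 + r := by
        calc ‖(2 - (starRingEnd ℂ) w * w) * z - w‖
            ≤ ‖(2 - (starRingEnd ℂ) w * w) * z‖ + ‖w‖ :=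
              (norm_sub_le _ _)
          _ ≤ (2 - r ^ 2) + r := by
              rw [norm_mul, hcw]
              have h2 : ‖(2 : ℂ) - ((r ^ 2 : ℝ) : ℂ)‖ = 2 - r ^ 2 := by
                rw [show ((2 : ℂ) - ((r ^ 2 : ℝ) : ℂ)) = (((2 - r ^ 2 : ℝ)) : ℂ) by push_cast; ring,
                  Complex.norm_real, Real.norm_eq_abs, abs_of_nonneg (by nlinarith)]
              rw [h2]
              nlinarith [norm_nonneg ((2 : ℂ) - ((r^2:ℝ):ℂ))]
          _ = 2 - r ^ 2 + r := by ring
      have hd3 : (1 - r) ^ 3 ≤ ‖(1 - (starRingEnd ℂ) w * z) ^ 3‖ := by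
        rw [norm_pow]
        exact pow_le_pow_left₀ (by linarith) (hdenlb z hz) 3
      rw [norm_div, hM]
      apply div_le_div₀ (by nlinarith) hnum (pow_pos (by linarith) 3) hd3
    have ha' : a ∈ Metric.closedBall (0 : ℂ) 1 := by
      rw [Metric.mem_closedBall, dist_zero_right, ha]
    have hb' : b ∈ Metric.closedBall (0 : ℂ) 1 := by
      rw [Metric.mem_closedBall, dist_zero_right, hb]
    have := Convex.norm_image_sub_le_of_norm_hasDerivWithin_le hderiv hbound
      (convex_closedBall _ _) hb' ha'
    simpa using this
  -- continuity of the two integrands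
  have hmem : ∀ x : ℝ, Complex.exp (Complex.I * (x : ℂ)) ∈ {z : ℂ | ‖z‖ = 1} := by
    intro x
    simp [Complex.norm_exp]
  have hcexp : Continuous fun x : ℝ => Complex.exp (Complex.I * (x : ℂ)) := by
    continuity
  have hu : Continuous fun x : ℝ => φ (Complex.exp (Complex.I * (x : ℂ))) :=
    hcontφ.comp_continuous hcexp hmem
  have hv : Continuous fun x : ℝ => ψ (Complex.exp (Complex.I * (x : ℂ))) :=
    hcontψ.comp_continuous hcexp hmem
  have habsu : ∀ x : ℝ, ‖φ (Complex.exp (Complex.I * (x : ℂ)))‖ = 1 :=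
    fun x => hmapsφ _ (hmem x)
  have habsv : ∀ x : ℝ, ‖ψ (Complex.exp (Complex.I * (x : ℂ)))‖ = 1 :=
    fun x => hmapsψ _ (hmem x)
  have hFu : Continuous fun x : ℝ =>
      (φ (Complex.exp (Complex.I * (x : ℂ))) - w) * φ (Complex.exp (Complex.I * (x : ℂ))) /
        (1 - (starRingEnd ℂ) w * φ (Complex.exp (Complex.I * (x : ℂ)))) ^ 2 := by
    apply Continuous.div (((hu.sub continuous_const).mul hu))
      ((continuous_const.sub (continuous_const.mul hu)).pow 2)
    intro x
    exact pow_ne_zero 2 (hden _ (le_of_eq (habsu x)))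
  have hFv : Continuous fun x : ℝ =>
      (ψ (Complex.exp (Complex.I * (x : ℂ))) - w) * ψ (Complex.exp (Complex.I * (x : ℂ))) /
        (1 - (starRingEnd ℂ) w * ψ (Complex.exp (Complex.I * (x : ℂ)))) ^ 2 := by
    apply Continuous.div (((hv.sub continuous_const).mul hv))
      ((continuous_const.sub (continuous_const.mul hv)).pow 2)
    intro x
    exact pow_ne_zero 2 (hden _ (le_of_eq (habsv x)))
  -- combine integrals
  have hid : avgDerivBar φ w - avgDerivBar ψ w
      = (1 / (2 * Real.pi)) • ∫ x in (0:ℝ)..(2 * Real.pi),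
          ((φ (Complex.exp (Complex.I * (x : ℂ))) - w) * φ (Complex.exp (Complex.I * (x : ℂ))) /
            (1 - (starRingEnd ℂ) w * φ (Complex.exp (Complex.I * (x : ℂ)))) ^ 2
          - (ψ (Complex.exp (Complex.I * (x : ℂ))) - w) * ψ (Complex.exp (Complex.I * (x : ℂ))) /
            (1 - (starRingEnd ℂ) w * ψ (Complex.exp (Complex.I * (x : ℂ)))) ^ 2) := by
    rw [avgDerivBar, avgDerivBar, ← smul_sub,
      intervalIntegral.integral_sub (hFu.intervalIntegrable _ _) (hFv.intervalIntegrable _ _)]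
  -- pointwise bound on the integrand
  have hptwise : ∀ x : ℝ,
      ‖(φ (Complex.exp (Complex.I * (x : ℂ))) - w) * φ (Complex.exp (Complex.I * (x : ℂ))) /
          (1 - (starRingEnd ℂ) w * φ (Complex.exp (Complex.I * (x : ℂ)))) ^ 2
        - (ψ (Complex.exp (Complex.I * (x : ℂ))) - w) * ψ (Complex.exp (Complex.I * (x : ℂ))) /
          (1 - (starRingEnd ℂ) w * ψ (Complex.exp (Complex.I * (x : ℂ)))) ^ 2‖ ≤ M * δ := by
    intro x
    have h1 := key _ _ (habsu x) (habsv x)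
    have h2 : ‖φ (Complex.exp (Complex.I * (x : ℂ)))
        - ψ (Complex.exp (Complex.I * (x : ℂ)))‖ ≤ δ :=
      (abs_sub_le_dS1 (habsu x) (habsv x)).trans (hδle _ (hmem x))
    calc ‖_‖ ≤ M * ‖φ (Complex.exp (Complex.I * (x : ℂ)))
          - ψ (Complex.exp (Complex.I * (x : ℂ)))‖ := h1
      _ ≤ M * δ := by nlinarith [norm_nonneg (φ (Complex.exp (Complex.I * (x : ℂ)))
          - ψ (Complex.exp (Complex.I * (x : ℂ))))]
  have hnorm : ‖∫ x in (0:ℝ)..(2 * Real.pi),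
      ((φ (Complex.exp (Complex.I * (x : ℂ))) - w) * φ (Complex.exp (Complex.I * (x : ℂ))) /
        (1 - (starRingEnd ℂ) w * φ (Complex.exp (Complex.I * (x : ℂ)))) ^ 2
      - (ψ (Complex.exp (Complex.I * (x : ℂ))) - w) * ψ (Complex.exp (Complex.I * (x : ℂ))) /
        (1 - (starRingEnd ℂ) w * ψ (Complex.exp (Complex.I * (x : ℂ)))) ^ 2)‖
      ≤ (M * δ) * |2 * Real.pi - 0| :=
    intervalIntegral.norm_integral_le_of_norm_le_const fun x _ => hptwise x
  have hπ : 0 < Real.pi := Real.pi_pos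
  have hfinal : ‖avgDerivBar φ w - avgDerivBar ψ w‖ ≤ M * δ := by
    rw [hid, norm_smul]
    have h2π : |2 * Real.pi - 0| = 2 * Real.pi := by
      rw [sub_zero, abs_of_pos (by linarith)]
    rw [h2π] at hnorm
    have : ‖(1 / (2 * Real.pi) : ℝ)‖ = 1 / (2 * Real.pi) := by
      rw [Real.norm_eq_abs, abs_of_pos (by positivity)]
    rw [this]
    calc 1 / (2 * Real.pi) * ‖_‖ ≤ 1 / (2 * Real.pi) * ((M * δ) * (2 * Real.pi)) := by
          apply mul_le_mul_of_nonneg_left hnorm (by positivity)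
      _ = M * δ := by field_simp
  refine hfinal.trans ?_
  have hMC : M ≤ (2 - r) * (1 + r) ^ 2 / (1 - r) ^ 4 := by
    rw [hM, div_le_div_iff₀ (pow_pos (by linarith) 3) (pow_pos (by linarith) 4)]
    nlinarith [mul_nonneg (mul_nonneg (mul_nonneg hr0 (by linarith : (0:ℝ) ≤ 2 - r))
      (by linarith : (0:ℝ) ≤ 1 + r)) (pow_nonneg (by linarith : (0:ℝ) ≤ 1 - r) 3)]
  exact mul_le_mul_of_nonneg_right hMC hδ0
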